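/- Let ℰ be a regular bundle event structure. If a configuration x of ℰ contains a final event (x ∩ Φ_ℰ ≠ ∅), then x is maximal in C(ℰ) with respect to set inclusion. -/

import Mathlib

open Classical

namespace PCKA

/-- A bundle event structure over event universe `Ev` and alphabet `A`:
a set of events, a conflict relation, a bundle relation, a partial labelling
(modelled via `Option`) and a set of final events. -/
structure BES (Ev A : Type) where
  E : Set Ev
  conflict : Ev → Ev → Prop
  bundle : Set Ev → Ev → Prop
  lab : Ev → Option A
  final : Set Ev

variable {Ev A : Type}

/-- Well-formedness of a bundle event structure. -/
def IsBES (ℰ : BES Ev A) : Prop :=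
  (∀ e, ¬ ℰ.conflict e e) ∧
  (∀ e e', ℰ.conflict e e' → ℰ.conflict e' e) ∧
  (∀ e e', ℰ.conflict e e' → e ∈ ℰ.E ∧ e' ∈ ℰ.E) ∧
  (∀ x e, ℰ.bundle x e → e ∈ ℰ.E ∧ x ⊆ ℰ.E ∧
    ∀ a ∈ x, ∀ b ∈ x, a ≠ b → ℰ.conflict a b) ∧
  (∀ e, ℰ.lab e ≠ none → e ∈ ℰ.E) ∧
  ℰ.final ⊆ ℰ.E ∧
  (∀ a ∈ ℰ.final, ∀ b ∈ ℰ.final, a ≠ b → ℰ.conflict a b)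

/-- `α` is an event trace of `ℰ`: every event is enabled by each of its bundles
and is distinct from and conflict-free with all earlier events. -/
def IsTrace (ℰ : BES Ev A) (α : List Ev) : Prop :=
  ∀ l e r, α = l ++ e :: r →
    e ∈ ℰ.E ∧
    (∀ x, ℰ.bundle x e → ∃ e' ∈ l, e' ∈ x) ∧
    (∀ e' ∈ l, e ≠ e' ∧ ¬ ℰ.conflict e e')

/-- A configuration is the set of events of some event trace (a linearisation). -/
def IsConfig (ℰ : BES Ev A) (x : Set Ev) : Prop :=
  ∃ α : List Ev, IsTrace ℰ α ∧ {e | e ∈ α} = x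

/-- Adjacent occurrences in a list. -/
def traceAdj (α : List Ev) (a b : Ev) : Prop := ∃ l r, α = l ++ a :: b :: r

/-- The order `≼_α` induced by an event trace: reflexive transitive closure of
adjacency in the trace. -/
def traceOrder (α : List Ev) : Ev → Ev → Prop := Relation.ReflTransGen (traceAdj α)

/-- The causal order `≼_x` of a configuration: the intersection of the orders
of all its linearisations. -/
def configOrder (ℰ : BES Ev A) (x : Set Ev) (a b : Ev) : Prop :=
  ∀ α, IsTrace ℰ α → {e | e ∈ α} = x → traceOrder α a b

/-- The labelling restricted to a set of events. -/
noncomputable def labOn (ℰ : BES Ev A) (x : Set Ev) : Ev → Option A :=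
  fun e => if e ∈ x then ℰ.lab e else none

/-- `(x, o, l)` is the lposet of the configuration `x` of `ℰ`. -/
def IsLposetOf (ℰ : BES Ev A) (x : Set Ev) (o : Ev → Ev → Prop)
    (l : Ev → Option A) : Prop :=
  IsConfig ℰ x ∧
  (∀ a b, o a b ↔ (a ∈ x ∧ b ∈ x ∧ configOrder ℰ x a b)) ∧
  l = labOn ℰ x

/-- The lposet `(x,ox,lx)` is a prefix of the lposet `(y,oy,ly)`. -/
def LposetPrefix (x : Set Ev) (ox : Ev → Ev → Prop) (lx : Ev → Option A)
    (y : Set Ev) (oy : Ev → Ev → Prop) (ly : Ev → Option A) : Prop :=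
  x ⊆ y ∧
  (∀ e ∈ x, ly e = lx e) ∧
  (∀ e e', oy e e' → e' ∈ x → e ∈ x ∧ ox e e')

/-- Restriction of a list to the elements of a set (the subsequence `α|_x`). -/
noncomputable def listRestrict (α : List Ev) (x : Set Ev) : List Ev :=
  α.filter (fun e => decide (e ∈ x))

/-- The sub-BES order `ℰ ⊑ ℱ`. -/
def SubBES (ℰ ℱ : BES Ev A) : Prop :=
  ℰ.E ⊆ ℱ.E ∧
  (∀ e e', ℰ.conflict e e' ↔ (ℱ.conflict e e' ∧ e ∈ ℰ.E ∧ e' ∈ ℰ.E)) ∧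
  (∀ x e, ℰ.bundle x e → ℱ.bundle x e) ∧
  (∀ x e, ℱ.bundle x e → e ∈ ℰ.E → x ⊆ ℰ.E ∧ ℰ.bundle x e) ∧
  (∀ e ∈ ℰ.E, ℰ.lab e = ℱ.lab e) ∧
  (∀ e, e ∈ ℰ.final ↔ (e ∈ ℱ.final ∧ e ∈ ℰ.E))

/-- `ℰ` is the componentwise union of the chain `c`. -/
def IsChainUnion (c : ℕ → BES Ev A) (ℰ : BES Ev A) : Prop :=
  ℰ.E = (⋃ i, (c i).E) ∧
  (∀ e e', ℰ.conflict e e' ↔ ∃ i, (c i).conflict e e') ∧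
  (∀ x e, ℰ.bundle x e ↔ ∃ i, (c i).bundle x e) ∧
  (∀ i, ∀ e ∈ (c i).E, ℰ.lab e = (c i).lab e) ∧
  (∀ e, e ∉ (⋃ i, (c i).E) → ℰ.lab e = none) ∧
  ℰ.final = (⋃ i, (c i).final)

/-- Immediate conflict. -/
def ImmConflict (ℰ : BES Ev A) (e e' : Ev) : Prop :=
  ℰ.conflict e e' ∧
  ∃ x, IsConfig ℰ x ∧ IsConfig ℰ (x ∪ {e}) ∧ IsConfig ℰ (x ∪ {e'})

/-- A partial cluster: pairwise immediately conflicting, equally pointed events. -/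
def PartialCluster (ℰ : BES Ev A) (K : Set Ev) : Prop :=
  K ⊆ ℰ.E ∧
  (∀ e ∈ K, ∀ e' ∈ K, e ≠ e' → ImmConflict ℰ e e') ∧
  (∀ e ∈ K, ∀ e' ∈ K, ∀ x, ℰ.bundle x e → ℰ.bundle x e')

/-- A cluster is a maximal partial cluster. -/
def Cluster (ℰ : BES Ev A) (K : Set Ev) : Prop :=
  PartialCluster ℰ K ∧ ∀ H, PartialCluster ℰ H → K ⊆ H → H = K

/-- `⟨e⟩`: the intersection of all clusters containing `e`. -/
def cell (ℰ : BES Ev A) (e : Ev) : Set Ev :=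
  ⋂₀ {K | Cluster ℰ K ∧ e ∈ K}

/-- `cfl x`: events in conflict with some event of `x`. -/
def cfl (ℰ : BES Ev A) (x : Set Ev) : Set Ev :=
  {e | e ∈ ℰ.E ∧ ∃ e' ∈ x, ℰ.conflict e e'}

/-- Confusion freeness. -/
def ConfusionFree (ℰ : BES Ev A) : Prop :=
  (∀ e e', ImmConflict ℰ e e' → e ∈ cell ℰ e') ∧
  (∀ x e, IsConfig ℰ x → cell ℰ e ∩ x = ∅ → IsConfig ℰ (x ∪ {e}) →
    ∀ e'' ∈ cell ℰ e, IsConfig ℰ (x ∪ {e''}))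

/-- Initial events: those pointed by no bundle. -/
def bInit (ℰ : BES Ev A) : Set Ev :=
  {e | e ∈ ℰ.E ∧ ∀ x, ¬ ℰ.bundle x e}

/-- Nondeterministic choice `ℰ + ℱ` (for disjoint BES). -/
def bchoice (ℰ ℱ : BES Ev A) : BES Ev A where
  E := ℰ.E ∪ ℱ.E
  conflict := fun e e' => ℰ.conflict e e' ∨ ℱ.conflict e e' ∨
    (e ∈ bInit ℰ ∧ e' ∈ bInit ℱ) ∨ (e ∈ bInit ℱ ∧ e' ∈ bInit ℰ) ∨
    (e ∈ ℰ.final ∧ e' ∈ ℱ.final) ∨ (e ∈ ℱ.final ∧ e' ∈ ℰ.final)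
  bundle := fun x e => ℰ.bundle x e ∨ ℱ.bundle x e
  lab := fun e => (ℰ.lab e).orElse (fun _ => ℱ.lab e)
  final := ℰ.final ∪ ℱ.final

/-- Sequential composition `ℰ · ℱ` (for disjoint BES). -/
def bseq (ℰ ℱ : BES Ev A) : BES Ev A where
  E := ℰ.E ∪ ℱ.E
  conflict := fun e e' => ℰ.conflict e e' ∨ ℱ.conflict e e'
  bundle := fun x e => ℰ.bundle x e ∨ ℱ.bundle x e ∨ (x = ℰ.final ∧ e ∈ bInit ℱ)
  lab := fun e => (ℰ.lab e).orElse (fun _ => ℱ.lab e)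
  final := ℱ.final

/-- Concurrent composition `ℰ ‖ ℱ` with fresh delimiter events `d₁, d₂`. -/
def bpar (ℰ ℱ : BES Ev A) (d₁ d₂ : Ev) : BES Ev A where
  E := ℰ.E ∪ ℱ.E ∪ {d₁, d₂}
  conflict := fun e e' => ℰ.conflict e e' ∨ ℱ.conflict e e'
  bundle := fun x e => ℰ.bundle x e ∨ ℱ.bundle x e ∨
    (x = {d₁} ∧ (e ∈ bInit ℰ ∨ e ∈ bInit ℱ)) ∨
    (x = ℰ.final ∧ e = d₂) ∨ (x = ℱ.final ∧ e = d₂)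
  lab := fun e => (ℰ.lab e).orElse (fun _ => ℱ.lab e)
  final := {d₂}

/-- Renaming of a BES along a map of events. -/
noncomputable def brename (g : Ev → Ev) (ℰ : BES Ev A) : BES Ev A where
  E := g '' ℰ.E
  conflict := fun e e' => ∃ a b, ℰ.conflict a b ∧ e = g a ∧ e' = g b
  bundle := fun x e => ∃ y a, ℰ.bundle y a ∧ x = g '' y ∧ e = g a
  lab := fun e => if h : ∃ a, a ∈ ℰ.E ∧ g a = e then ℰ.lab h.choose else none
  final := g '' ℰ.final

/-- `ℰ'` is a (fresh) copy of `ℰ`. -/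
def IsCopy (ℰ' ℰ : BES Ev A) : Prop :=
  ∃ g : Ev → Ev, Set.InjOn g ℰ.E ∧ ℰ' = brename g ℰ

/-- `𝒮` is the binary Kleene product `ℰ * ℱ`: the componentwise union of the
chain `ℱ ⊑ ℱ + ℰ·ℱ ⊑ ⋯` built with fresh disjoint copies at each stage. -/
def IsStarOf (ℰ ℱ 𝒮 : BES Ev A) : Prop :=
  ∃ c : ℕ → BES Ev A,
    IsCopy (c 0) ℱ ∧
    (∀ i, ∃ ℰ' ℱ' : BES Ev A, IsCopy ℰ' ℰ ∧ IsCopy ℱ' ℱ ∧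
      ℱ'.E ∩ (ℰ'.E ∪ (c i).E) = ∅ ∧ ℰ'.E ∩ (c i).E = ∅ ∧
      c (i + 1) = bchoice ℱ' (bseq ℰ' (c i)) ∧
      SubBES (c i) (c (i + 1))) ∧
    IsChainUnion c 𝒮

/-- The basic BES `0` (deadlock). -/
def besZero : BES Ev A :=
  ⟨∅, fun _ _ => False, fun _ _ => False, fun _ => none, ∅⟩

/-- The basic BES `1` (skip), with a single unlabelled final event. -/
def besOne (e : Ev) : BES Ev A :=
  ⟨{e}, fun _ _ => False, fun _ _ => False, fun _ => none, {e}⟩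

/-- The basic BES for a one-step action `a`. -/
noncomputable def besAct (e : Ev) (a : A) : BES Ev A :=
  ⟨{e}, fun _ _ => False, fun _ _ => False,
    fun e' => if e' = e then some a else none, {e}⟩

/-- Regular BES: built from the basic BES by `+`, `·`, `‖` and `*`. -/
inductive Regular : BES Ev A → Prop
  | zero : Regular besZero
  | one (e : Ev) : Regular (besOne e)
  | act (e : Ev) (a : A) : Regular (besAct e a)
  | choice {ℰ ℱ : BES Ev A} : Regular ℰ → Regular ℱ → ℰ.E ∩ ℱ.E = ∅ →
      Regular (bchoice ℰ ℱ)
  | seq {ℰ ℱ : BES Ev A} : Regular ℰ → Regular ℱ → ℰ.E ∩ ℱ.E = ∅ →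
      Regular (bseq ℰ ℱ)
  | par {ℰ ℱ : BES Ev A} (d₁ d₂ : Ev) : Regular ℰ → Regular ℱ →
      ℰ.E ∩ ℱ.E = ∅ → d₁ ≠ d₂ → d₁ ∉ ℰ.E ∪ ℱ.E → d₂ ∉ ℰ.E ∪ ℱ.E →
      Regular (bpar ℰ ℱ d₁ d₂)
  | star {ℰ ℱ 𝒮 : BES Ev A} : Regular ℰ → Regular ℱ → IsStarOf ℰ ℱ 𝒮 →
      Regular 𝒮

/-- A probability distribution on a BES: a discrete distribution on events
whose support is contained in a single cell `⟨e⟩`. -/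
def IsDistOn (ℰ : BES Ev A) (p : PMF Ev) : Prop :=
  ∃ e ∈ ℰ.E, p.support ⊆ cell ℰ e

/-- A probabilistic bundle event structure: a BES with a set of distributions. -/
structure PBES (Ev A : Type) where
  bes : BES Ev A
  dists : Set (PMF Ev)

/-- Well-formedness of a probabilistic BES. -/
def IsPBES (P : PBES Ev A) : Prop :=
  IsBES P.bes ∧ ConfusionFree P.bes ∧
  (∀ p ∈ P.dists, IsDistOn P.bes p) ∧
  (∀ e ∈ P.bes.E, ∃ p ∈ P.dists, e ∈ p.support)

/-- No bundle set contains a final event. -/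
def NoFinalBundle (ℰ : BES Ev A) : Prop :=
  ∀ x e, ℰ.bundle x e → x ∩ ℰ.final = ∅

/-- Probabilistic prefix: `x ⊑ Δ` iff `Δ = Σ_{e ∈ supp p} p e · δ_{x ∪ {e}}`
for some `p` in the distribution set, with `supp p` disjoint from `x` and all
extensions configurations. -/
def ProbPrefix (P : PBES Ev A) (x : Set Ev) (Δ : PMF (Set Ev)) : Prop :=
  IsConfig P.bes x ∧
  ∃ p ∈ P.dists, p.support ∩ x = ∅ ∧
    (∀ e ∈ p.support, IsConfig P.bes (x ∪ {e})) ∧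
    Δ = p.bind (fun e => PMF.pure (x ∪ {e}))

/-- Lifting of a relation `S ⊆ X × 𝒟(Y)` to `𝒟(X) × 𝒟(Y)`. -/
def Lift {X Y : Type} (S : X → PMF Y → Prop) (Δ : PMF X) (Θ : PMF Y) : Prop :=
  ∃ (ι : Type) (_ : Countable ι) (w : PMF ι) (xs : ι → X) (Θs : ι → PMF Y),
    Δ = w.bind (fun i => PMF.pure (xs i)) ∧
    (∀ i, w i ≠ 0 → S (xs i) (Θs i)) ∧
    Θ = w.bind Θs

/-- The labelled events of a configuration. -/
def hatSet (ℰ : BES Ev A) (x : Set Ev) : Set Ev :=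
  {e | e ∈ x ∧ ℰ.lab e ≠ none}

/-- Implementation (subsumption) `x ⊑_s y` between configurations: a
label-preserving monotonic bijection from the labelled events of `y` to those
of `x`. -/
def Subsum (ℰ : BES Ev A) (x : Set Ev) (ℱ : BES Ev A) (y : Set Ev) : Prop :=
  ∃ f : Ev → Ev, Set.BijOn f (hatSet ℱ y) (hatSet ℰ x) ∧
    (∀ e ∈ hatSet ℱ y, ℰ.lab (f e) = ℱ.lab e) ∧
    (∀ e e', e ∈ hatSet ℱ y → e' ∈ hatSet ℱ y →
      configOrder ℱ y e e' → configOrder ℰ x (f e) (f e'))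

/-- Probabilistic simulation from `P` to `Q`. -/
def IsSimulation (P Q : PBES Ev A) (S : Set Ev → PMF (Set Ev) → Prop) : Prop :=
  S ∅ (PMF.pure ∅) ∧
  (∀ x Θ, S x Θ → IsConfig P.bes x ∧
    ∀ y ∈ Θ.support, IsConfig Q.bes y ∧ Subsum P.bes x Q.bes y) ∧
  (∀ x Θ Δ', S x Θ → ProbPrefix P x Δ' →
    ∃ Θ', Relation.ReflTransGen (Lift (ProbPrefix Q)) Θ Θ' ∧ Lift S Δ' Θ') ∧
  (∀ x Θ, S x Θ → (x ∩ P.bes.final).Nonempty →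
    ∀ y ∈ Θ.support, (y ∩ Q.bes.final).Nonempty)

/-- `P ⊑ Q`: there exists a probabilistic simulation from `P` to `Q`. -/
def Sim (P Q : PBES Ev A) : Prop := ∃ S, IsSimulation P Q S

/-- Nondeterministic choice of pBES. -/
def pch (P Q : PBES Ev A) : PBES Ev A :=
  ⟨bchoice P.bes Q.bes, P.dists ∪ Q.dists⟩

/-- Sequential composition of pBES. -/
def pseq (P Q : PBES Ev A) : PBES Ev A :=
  ⟨bseq P.bes Q.bes, P.dists ∪ Q.dists⟩

/-- Concurrent composition of pBES with fresh delimiters `d₁, d₂`. -/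
noncomputable def ppar (P Q : PBES Ev A) (d₁ d₂ : Ev) : PBES Ev A :=
  ⟨bpar P.bes Q.bes d₁ d₂, P.dists ∪ Q.dists ∪ {PMF.pure d₁, PMF.pure d₂}⟩

/-- The sub-pBES order. -/
def SubPBES (P Q : PBES Ev A) : Prop :=
  SubBES P.bes Q.bes ∧ P.dists = {p | p ∈ Q.dists ∧ p.support ⊆ P.bes.E}

/-- Renaming of a pBES. -/
noncomputable def prename (g : Ev → Ev) (P : PBES Ev A) : PBES Ev A :=
  ⟨brename g P.bes, (fun p => p.map g) '' P.dists⟩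

/-- `P'` is a (fresh) copy of the pBES `P`. -/
def IsPCopy (P' P : PBES Ev A) : Prop :=
  ∃ g : Ev → Ev, Set.InjOn g P.bes.E ∧ P' = prename g P

/-- Componentwise union of a chain of pBES. -/
def IsPChainUnion (c : ℕ → PBES Ev A) (P : PBES Ev A) : Prop :=
  IsChainUnion (fun i => (c i).bes) P.bes ∧ P.dists = ⋃ i, (c i).dists

/-- `S` is the binary Kleene product `P * G` of pBES. -/
def IsPStarOf (P G S : PBES Ev A) : Prop :=
  ∃ c : ℕ → PBES Ev A,
    IsPCopy (c 0) G ∧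
    (∀ i, ∃ P' G' : PBES Ev A, IsPCopy P' P ∧ IsPCopy G' G ∧
      G'.bes.E ∩ (P'.bes.E ∪ (c i).bes.E) = ∅ ∧ P'.bes.E ∩ (c i).bes.E = ∅ ∧
      c (i + 1) = pch G' (pseq P' (c i)) ∧
      SubPBES (c i) (c (i + 1))) ∧
    IsPChainUnion c S

/-! ### Auxiliary lemmas for the maximality theorem -/

section FinalMax

variable {Ev A : Type}

lemma isTrace_nil (ℰ : BES Ev A) : IsTrace ℰ [] := by
  intro l e r h
  exact absurd h (by simp)

lemma isTrace_concat {ℰ : BES Ev A} {α : List Ev} {e : Ev} :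
    IsTrace ℰ (α ++ [e]) ↔ IsTrace ℰ α ∧ e ∈ ℰ.E ∧
      (∀ x, ℰ.bundle x e → ∃ e' ∈ α, e' ∈ x) ∧
      (∀ e' ∈ α, e ≠ e' ∧ ¬ ℰ.conflict e e') := by
  constructor
  · intro h
    refine ⟨?_, h α e [] rfl⟩
    intro l e' r hd
    exact h l e' (r ++ [e]) (by rw [hd]; simp)
  · rintro ⟨h1, h2, h3, h4⟩ l e' r hd
    rcases List.eq_nil_or_concat r with rfl | ⟨r', a, rfl⟩
    · obtain ⟨hl, he⟩ := List.append_inj' hd rfl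
      obtain rfl : e = e' := by simpa using he
      subst hl
      exact ⟨h2, h3, h4⟩
    · have hd2 : α ++ [e] = (l ++ e' :: r') ++ [a] := by rw [hd]; simp
      obtain ⟨h5, -⟩ := List.append_inj' hd2 rfl
      exact h1 l e' r' h5

lemma isTrace_mem {ℰ : BES Ev A} {α : List Ev} (h : IsTrace ℰ α) {e : Ev}
    (he : e ∈ α) : e ∈ ℰ.E := by
  obtain ⟨l, r, rfl⟩ := List.append_of_mem he
  exact (h l e r rfl).1

lemma config_subset_E {ℰ : BES Ev A} {x : Set Ev} (h : IsConfig ℰ x) :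
    x ⊆ ℰ.E := by
  obtain ⟨α, hα, rfl⟩ := h
  exact fun v hv => isTrace_mem hα hv

lemma exists_first {p : Ev → Prop} :
    ∀ {α : List Ev}, (∃ e ∈ α, p e) →
      ∃ l a r, α = l ++ a :: r ∧ p a ∧ ∀ v ∈ l, ¬ p v := by
  intro α
  induction α with
  | nil => rintro ⟨e, he, -⟩; simp at he
  | cons c α ih =>
    intro h
    by_cases hc : p c
    · exact ⟨[], c, α, rfl, hc, by simp⟩
    · obtain ⟨e, he, hpe⟩ := h
      rcases List.mem_cons.mp he with rfl | he'
      · exact absurd hpe hc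
      · obtain ⟨l, a, r, rfl, hpa, hl⟩ := ih ⟨e, he', hpe⟩
        refine ⟨c :: l, a, r, rfl, hpa, ?_⟩
        intro v hv
        rcases List.mem_cons.mp hv with rfl | hv'
        · exact hc
        · exact hl v hv'

lemma exists_first_two {p q : Ev → Prop} (hpq : ∀ e, ¬ (p e ∧ q e)) :
    ∀ {α : List Ev}, (∃ e ∈ α, p e) → (∃ e ∈ α, q e) →
      ∃ l a r, α = l ++ a :: r ∧ (∀ v ∈ l, ¬ p v ∧ ¬ q v) ∧
        ((p a ∧ ∃ b ∈ r, q b) ∨ (q a ∧ ∃ b ∈ r, p b)) := by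
  intro α
  induction α with
  | nil => rintro ⟨e, he, -⟩; simp at he
  | cons c α ih =>
    intro hp hq
    by_cases hc : p c
    · refine ⟨[], c, α, rfl, by simp, Or.inl ⟨hc, ?_⟩⟩
      obtain ⟨e, he, hqe⟩ := hq
      rcases List.mem_cons.mp he with rfl | he'
      · exact absurd ⟨hc, hqe⟩ (hpq e)
      · exact ⟨e, he', hqe⟩
    · by_cases hc' : q c
      · refine ⟨[], c, α, rfl, by simp, Or.inr ⟨hc', ?_⟩⟩
        obtain ⟨e, he, hpe⟩ := hp
        rcases List.mem_cons.mp he with rfl | he'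
        · exact absurd ⟨hpe, hc'⟩ (hpq e)
        · exact ⟨e, he', hpe⟩
      · obtain ⟨e, he, hpe⟩ := hp
        obtain ⟨e', he', hqe'⟩ := hq
        have he2 : e ∈ α := by
          rcases List.mem_cons.mp he with rfl | h'
          exacts [absurd hpe hc, h']
        have he2' : e' ∈ α := by
          rcases List.mem_cons.mp he' with rfl | h'
          exacts [absurd hqe' hc', h']
        obtain ⟨l, a, r, rfl, hl, hcase⟩ := ih ⟨e, he2, hpe⟩ ⟨e', he2', hqe'⟩
        refine ⟨c :: l, a, r, rfl, ?_, hcase⟩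
        intro v hv
        rcases List.mem_cons.mp hv with rfl | hv'
        · exact ⟨hc, hc'⟩
        · exact hl v hv'

lemma isTrace_restrict {ℰ 𝒢 : BES Ev A}
    (ha : ∀ x e, e ∈ ℰ.E → ℰ.bundle x e → 𝒢.bundle x e ∧ x ⊆ ℰ.E)
    (hb : ∀ e e', ℰ.conflict e e' → 𝒢.conflict e e')
    {α : List Ev} (h : IsTrace 𝒢 α) : IsTrace ℰ (listRestrict α ℰ.E) := by
  induction α using List.reverseRecOn with
  | nil => simpa [listRestrict] using isTrace_nil ℰ
  | append_singleton α e ih =>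
    obtain ⟨h1, h2, h3, h4⟩ := isTrace_concat.mp h
    by_cases he : e ∈ ℰ.E
    · have hr : listRestrict (α ++ [e]) ℰ.E = listRestrict α ℰ.E ++ [e] := by
        simp [listRestrict, List.filter_append, he]
      rw [hr]
      refine isTrace_concat.mpr ⟨ih h1, he, ?_, ?_⟩
      · intro x hx
        obtain ⟨hg, hsub⟩ := ha x e he hx
        obtain ⟨e', he', hex⟩ := h3 x hg
        exact ⟨e', by simp [listRestrict, List.mem_filter, he', hsub hex], hex⟩
      · intro e' he'
        have h5 : e' ∈ α := by
          simp only [listRestrict, List.mem_filter] at he'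
          exact he'.1
        exact ⟨(h4 e' h5).1, fun hc => (h4 e' h5).2 (hb _ _ hc)⟩
    · have hr : listRestrict (α ++ [e]) ℰ.E = listRestrict α ℰ.E := by
        simp [listRestrict, List.filter_append, he]
      rw [hr]
      exact ih h1

lemma isConfig_restrict {ℰ 𝒢 : BES Ev A}
    (ha : ∀ x e, e ∈ ℰ.E → ℰ.bundle x e → 𝒢.bundle x e ∧ x ⊆ ℰ.E)
    (hb : ∀ e e', ℰ.conflict e e' → 𝒢.conflict e e')
    {x : Set Ev} (hx : IsConfig 𝒢 x) : IsConfig ℰ (x ∩ ℰ.E) := by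
  obtain ⟨α, hα, rfl⟩ := hx
  refine ⟨listRestrict α ℰ.E, isTrace_restrict ha hb hα, ?_⟩
  ext e
  simp [listRestrict, List.mem_filter]

/-- The key invariant: well-formed bundles and finals, plus maximality of
configurations containing a final event. -/
def GoodB (ℰ : BES Ev A) : Prop :=
  (∀ x e, ℰ.bundle x e → e ∈ ℰ.E ∧ x ⊆ ℰ.E) ∧
  ℰ.final ⊆ ℰ.E ∧
  ∀ x y : Set Ev, IsConfig ℰ x → IsConfig ℰ y → (x ∩ ℰ.final).Nonempty →
    x ⊆ y → y = x

lemma GoodB_zero : GoodB (besZero : BES Ev A) := by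
  refine ⟨fun x e h => h.elim, fun e h => h, ?_⟩
  rintro x y - - ⟨f, -, hf⟩ -
  exact absurd hf (by simp [besZero])

lemma GoodB_single {ℰ : BES Ev A} {e : Ev} (hE : ℰ.E = {e}) (hF : ℰ.final = {e})
    (hB : ∀ x e', ¬ ℰ.bundle x e') : GoodB ℰ := by
  refine ⟨fun x e' h => absurd h (hB x e'), by rw [hE, hF], ?_⟩
  rintro x y hx hy ⟨f, hfx, hff⟩ hxy
  have hfe : f = e := by rw [hF] at hff; exact hff
  subst hfe
  apply Set.Subset.antisymm _ hxy
  intro v hv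
  have : v ∈ ℰ.E := config_subset_E hy hv
  rw [hE] at this
  rwa [this]

lemma GoodB_one (e : Ev) : GoodB (besOne e : BES Ev A) :=
  GoodB_single rfl rfl (fun _ _ h => h)

lemma GoodB_act (e : Ev) (a : A) : GoodB (besAct e a) :=
  GoodB_single rfl rfl (fun _ _ h => h)

end FinalMax
section FinalMax2

variable {Ev A : Type}

lemma bchoice_sides {ℰ ℱ : BES Ev A} (hℰ : GoodB ℰ) (hℱ : GoodB ℱ)
    (hd : ℰ.E ∩ ℱ.E = ∅) {α : List Ev} (h : IsTrace (bchoice ℰ ℱ) α) :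
    (∀ e ∈ α, e ∈ ℰ.E) ∨ (∀ e ∈ α, e ∈ ℱ.E) := by
  have hdisj : ∀ e, ¬ (e ∈ ℰ.E ∧ e ∈ ℱ.E) := by
    intro e he
    exact Set.eq_empty_iff_forall_notMem.mp hd e he
  by_contra hcon
  push_neg at hcon
  obtain ⟨⟨e1, he1, hne1⟩, ⟨e2, he2, hne2⟩⟩ := hcon
  have hmem : ∀ e ∈ α, e ∈ ℰ.E ∨ e ∈ ℱ.E := fun e he => isTrace_mem h he
  have hp : ∃ e ∈ α, e ∈ ℰ.E := ⟨e2, he2, (hmem e2 he2).resolve_right hne2⟩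
  have hq : ∃ e ∈ α, e ∈ ℱ.E := ⟨e1, he1, (hmem e1 he1).resolve_left hne1⟩
  obtain ⟨l, a, r, rfl, hl, hcase⟩ := exists_first_two hdisj hp hq
  rcases hcase with ⟨haE, b, hb, hbF⟩ | ⟨haF, b, hb, hbE⟩
  · -- a ∈ ℰ.E is first, later an ℱ-event; find the first ℱ-event after a
    obtain ⟨l₃, f₀, r₃, rfl, hf₀, hl₃⟩ :=
      exists_first (p := fun v => v ∈ ℱ.E) ⟨b, hb, hbF⟩
    have hα2 : l ++ a :: (l₃ ++ f₀ :: r₃) = (l ++ a :: l₃) ++ f₀ :: r₃ := by simp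
    have ht := h (l ++ a :: l₃) f₀ r₃ hα2
    have hta := h l a (l₃ ++ f₀ :: r₃) rfl
    have hainit : a ∈ bInit ℰ := by
      refine ⟨haE, fun y hby => ?_⟩
      obtain ⟨v, hv, hvy⟩ := hta.2.1 y (Or.inl hby)
      exact (hl v hv).1 ((hℰ.1 y a hby).2 hvy)
    have hfinit : f₀ ∈ bInit ℱ := by
      refine ⟨hf₀, fun y hby => ?_⟩
      obtain ⟨v, hv, hvy⟩ := ht.2.1 y (Or.inr hby)
      have hvF : v ∈ ℱ.E := (hℱ.1 y f₀ hby).2 hvy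
      rcases List.mem_append.mp hv with hv' | hv'
      · exact (hl v hv').2 hvF
      · rcases List.mem_cons.mp hv' with rfl | hv''
        · exact hdisj v ⟨haE, hvF⟩
        · exact hl₃ v hv'' hvF
    have hmem_a : a ∈ l ++ a :: l₃ := by simp
    exact (ht.2.2 a hmem_a).2 (Or.inr (Or.inr (Or.inr (Or.inl ⟨hfinit, hainit⟩))))
  · obtain ⟨l₃, e₀, r₃, rfl, he₀, hl₃⟩ :=
      exists_first (p := fun v => v ∈ ℰ.E) ⟨b, hb, hbE⟩
    have hα2 : l ++ a :: (l₃ ++ e₀ :: r₃) = (l ++ a :: l₃) ++ e₀ :: r₃ := by simp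
    have ht := h (l ++ a :: l₃) e₀ r₃ hα2
    have hta := h l a (l₃ ++ e₀ :: r₃) rfl
    have hainit : a ∈ bInit ℱ := by
      refine ⟨haF, fun y hby => ?_⟩
      obtain ⟨v, hv, hvy⟩ := hta.2.1 y (Or.inr hby)
      exact (hl v hv).2 ((hℱ.1 y a hby).2 hvy)
    have heinit : e₀ ∈ bInit ℰ := by
      refine ⟨he₀, fun y hby => ?_⟩
      obtain ⟨v, hv, hvy⟩ := ht.2.1 y (Or.inl hby)
      have hvE : v ∈ ℰ.E := (hℰ.1 y e₀ hby).2 hvy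
      rcases List.mem_append.mp hv with hv' | hv'
      · exact (hl v hv').1 hvE
      · rcases List.mem_cons.mp hv' with rfl | hv''
        · exact hdisj v ⟨hvE, haF⟩
        · exact hl₃ v hv'' hvE
    have hmem_a : a ∈ l ++ a :: l₃ := by simp
    exact (ht.2.2 a hmem_a).2 (Or.inr (Or.inr (Or.inl ⟨heinit, hainit⟩)))

lemma GoodB_bchoice {ℰ ℱ : BES Ev A} (hℰ : GoodB ℰ) (hℱ : GoodB ℱ)
    (hd : ℰ.E ∩ ℱ.E = ∅) : GoodB (bchoice ℰ ℱ) := by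
  have hdisj : ∀ e, e ∈ ℰ.E → e ∈ ℱ.E → False := by
    intro e h1 h2
    exact Set.eq_empty_iff_forall_notMem.mp hd e ⟨h1, h2⟩
  refine ⟨?_, ?_, ?_⟩
  · rintro x e (hb | hb)
    · exact ⟨Or.inl (hℰ.1 x e hb).1, fun v hv => Or.inl ((hℰ.1 x e hb).2 hv)⟩
    · exact ⟨Or.inr (hℱ.1 x e hb).1, fun v hv => Or.inr ((hℱ.1 x e hb).2 hv)⟩
  · rintro e (he | he)
    · exact Or.inl (hℰ.2.1 he)
    · exact Or.inr (hℱ.2.1 he)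
  · intro x y hx hy hfin hxy
    obtain ⟨f, hfx, hff⟩ := hfin
    have hsx : ∀ z : Set Ev, IsConfig (bchoice ℰ ℱ) z →
        (z ⊆ ℰ.E) ∨ (z ⊆ ℱ.E) := by
      rintro z ⟨α, hα, rfl⟩
      rcases bchoice_sides hℰ hℱ hd hα with h1 | h1
      · exact Or.inl (fun v hv => h1 v hv)
      · exact Or.inr (fun v hv => h1 v hv)
    rcases hff with hf | hf
    · -- f ∈ ℰ.final
      have hfE : f ∈ ℰ.E := hℰ.2.1 hf
      have hxE : x ⊆ ℰ.E :=
        (hsx x hx).resolve_right (fun h' => hdisj f hfE (h' hfx))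
      have hyE : y ⊆ ℰ.E :=
        (hsx y hy).resolve_right (fun h' => hdisj f hfE (h' (hxy hfx)))
      have ha : ∀ x' e, e ∈ ℰ.E → ℰ.bundle x' e →
          (bchoice ℰ ℱ).bundle x' e ∧ x' ⊆ ℰ.E :=
        fun x' e _ hb => ⟨Or.inl hb, (hℰ.1 x' e hb).2⟩
      have hb' : ∀ e e', ℰ.conflict e e' → (bchoice ℰ ℱ).conflict e e' :=
        fun e e' hc => Or.inl hc
      have hx' : IsConfig ℰ x := by
        have := isConfig_restrict ha hb' hx
        rwa [Set.inter_eq_left.mpr hxE] at this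
      have hy' : IsConfig ℰ y := by
        have := isConfig_restrict ha hb' hy
        rwa [Set.inter_eq_left.mpr hyE] at this
      exact hℰ.2.2 x y hx' hy' ⟨f, hfx, hf⟩ hxy
    · have hfF : f ∈ ℱ.E := hℱ.2.1 hf
      have hxF : x ⊆ ℱ.E :=
        (hsx x hx).resolve_left (fun h' => hdisj f (h' hfx) hfF)
      have hyF : y ⊆ ℱ.E :=
        (hsx y hy).resolve_left (fun h' => hdisj f (h' (hxy hfx)) hfF)
      have ha : ∀ x' e, e ∈ ℱ.E → ℱ.bundle x' e →
          (bchoice ℰ ℱ).bundle x' e ∧ x' ⊆ ℱ.E :=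
        fun x' e _ hb => ⟨Or.inr hb, (hℱ.1 x' e hb).2⟩
      have hb' : ∀ e e', ℱ.conflict e e' → (bchoice ℰ ℱ).conflict e e' :=
        fun e e' hc => Or.inr (Or.inl hc)
      have hx' : IsConfig ℱ x := by
        have := isConfig_restrict ha hb' hx
        rwa [Set.inter_eq_left.mpr hxF] at this
      have hy' : IsConfig ℱ y := by
        have := isConfig_restrict ha hb' hy
        rwa [Set.inter_eq_left.mpr hyF] at this
      exact hℱ.2.2 x y hx' hy' ⟨f, hfx, hf⟩ hxy

lemma bseq_final_mem {ℰ ℱ : BES Ev A} (hℱ : GoodB ℱ) {α : List Ev}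
    (h : IsTrace (bseq ℰ ℱ) α) {e : Ev} (he : e ∈ α) (heF : e ∈ ℱ.E) :
    ∃ φ ∈ α, φ ∈ ℰ.final := by
  obtain ⟨l, f₀, r, rfl, hf₀, hl⟩ :=
    exists_first (p := fun v => v ∈ ℱ.E) ⟨e, he, heF⟩
  have ht := h l f₀ r rfl
  have hinit : f₀ ∈ bInit ℱ := by
    refine ⟨hf₀, fun y hby => ?_⟩
    obtain ⟨v, hv, hvy⟩ := ht.2.1 y (Or.inr (Or.inl hby))
    exact hl v hv ((hℱ.1 y f₀ hby).2 hvy)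
  obtain ⟨φ, hφ, hφf⟩ := ht.2.1 ℰ.final (Or.inr (Or.inr ⟨rfl, hinit⟩))
  exact ⟨φ, List.mem_append_left _ hφ, hφf⟩

lemma GoodB_bseq {ℰ ℱ : BES Ev A} (hℰ : GoodB ℰ) (hℱ : GoodB ℱ)
    (_hd : ℰ.E ∩ ℱ.E = ∅) : GoodB (bseq ℰ ℱ) := by
  refine ⟨?_, ?_, ?_⟩
  · rintro x e (hb | hb | ⟨rfl, he⟩)
    · exact ⟨Or.inl (hℰ.1 x e hb).1, fun v hv => Or.inl ((hℰ.1 x e hb).2 hv)⟩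
    · exact ⟨Or.inr (hℱ.1 x e hb).1, fun v hv => Or.inr ((hℱ.1 x e hb).2 hv)⟩
    · exact ⟨Or.inr he.1, fun v hv => Or.inl (hℰ.2.1 hv)⟩
  · exact fun e he => Or.inr (hℱ.2.1 he)
  · intro x y hx hy hfin hxy
    obtain ⟨f, hfx, hff⟩ := hfin
    have hfF : f ∈ ℱ.E := hℱ.2.1 hff
    have haE : ∀ x' e, e ∈ ℰ.E → ℰ.bundle x' e →
        (bseq ℰ ℱ).bundle x' e ∧ x' ⊆ ℰ.E :=
      fun x' e _ hb => ⟨Or.inl hb, (hℰ.1 x' e hb).2⟩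
    have haF : ∀ x' e, e ∈ ℱ.E → ℱ.bundle x' e →
        (bseq ℰ ℱ).bundle x' e ∧ x' ⊆ ℱ.E :=
      fun x' e _ hb => ⟨Or.inr (Or.inl hb), (hℱ.1 x' e hb).2⟩
    have hbE : ∀ e e', ℰ.conflict e e' → (bseq ℰ ℱ).conflict e e' :=
      fun e e' hc => Or.inl hc
    have hbF : ∀ e e', ℱ.conflict e e' → (bseq ℰ ℱ).conflict e e' :=
      fun e e' hc => Or.inr hc
    have hxE := isConfig_restrict haE hbE hx
    have hxF := isConfig_restrict haF hbF hx
    have hyE := isConfig_restrict haE hbE hy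
    have hyF := isConfig_restrict haF hbF hy
    -- some ℰ-final occurred in x
    obtain ⟨α, hα, hsetx⟩ := hx
    have hfα : f ∈ α := by rw [← Set.mem_setOf_eq (p := fun e => e ∈ α), hsetx]; exact hfx
    obtain ⟨φ, hφα, hφf⟩ := bseq_final_mem hℱ hα hfα hfF
    have hφx : φ ∈ x := by rw [← hsetx]; exact hφα
    have h1 : y ∩ ℰ.E = x ∩ ℰ.E :=
      hℰ.2.2 (x ∩ ℰ.E) (y ∩ ℰ.E) hxE hyE ⟨φ, ⟨hφx, hℰ.2.1 hφf⟩, hφf⟩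
        (Set.inter_subset_inter_left _ hxy)
    have h2 : y ∩ ℱ.E = x ∩ ℱ.E :=
      hℱ.2.2 (x ∩ ℱ.E) (y ∩ ℱ.E) hxF hyF ⟨f, ⟨hfx, hfF⟩, hff⟩
        (Set.inter_subset_inter_left _ hxy)
    apply Set.Subset.antisymm _ hxy
    intro v hv
    have hvE : v ∈ ℰ.E ∨ v ∈ ℱ.E := config_subset_E hy hv
    rcases hvE with h' | h'
    · have : v ∈ y ∩ ℰ.E := ⟨hv, h'⟩
      rw [h1] at this
      exact this.1
    · have : v ∈ y ∩ ℱ.E := ⟨hv, h'⟩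
      rw [h2] at this
      exact this.1

end FinalMax2
section FinalMax3

variable {Ev A : Type}

lemma GoodB_bpar {ℰ ℱ : BES Ev A} {d₁ d₂ : Ev} (hℰ : GoodB ℰ) (hℱ : GoodB ℱ)
    (_hd : ℰ.E ∩ ℱ.E = ∅) (hdd : d₁ ≠ d₂) (hd1 : d₁ ∉ ℰ.E ∪ ℱ.E)
    (hd2 : d₂ ∉ ℰ.E ∪ ℱ.E) : GoodB (bpar ℰ ℱ d₁ d₂) := by
  have hd1E : d₁ ∈ ({d₁, d₂} : Set Ev) := Or.inl rfl
  have hd2E : d₂ ∈ ({d₁, d₂} : Set Ev) := Or.inr rfl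
  refine ⟨?_, ?_, ?_⟩
  · rintro x e (hb | hb | ⟨rfl, he⟩ | ⟨rfl, he⟩ | ⟨rfl, he⟩)
    · exact ⟨Or.inl (Or.inl (hℰ.1 x e hb).1),
        fun v hv => Or.inl (Or.inl ((hℰ.1 x e hb).2 hv))⟩
    · exact ⟨Or.inl (Or.inr (hℱ.1 x e hb).1),
        fun v hv => Or.inl (Or.inr ((hℱ.1 x e hb).2 hv))⟩
    · refine ⟨?_, ?_⟩
      · rcases he with he | he
        · exact Or.inl (Or.inl he.1)
        · exact Or.inl (Or.inr he.1)
      · intro v hv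
        have : v = d₁ := hv
        exact Or.inr (this ▸ hd1E)
    · exact ⟨Or.inr (by rw [he]; exact hd2E), fun v hv => Or.inl (Or.inl (hℰ.2.1 hv))⟩
    · exact ⟨Or.inr (by rw [he]; exact hd2E), fun v hv => Or.inl (Or.inr (hℱ.2.1 hv))⟩
  · intro e he
    have : e = d₂ := he
    exact Or.inr (this ▸ hd2E)
  · intro x y hx hy hfin hxy
    obtain ⟨f, hfx, hff⟩ := hfin
    have hfd : f = d₂ := hff
    -- restrictions
    have haE : ∀ x' e, e ∈ ℰ.E → ℰ.bundle x' e →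
        (bpar ℰ ℱ d₁ d₂).bundle x' e ∧ x' ⊆ ℰ.E :=
      fun x' e _ hb => ⟨Or.inl hb, (hℰ.1 x' e hb).2⟩
    have haF : ∀ x' e, e ∈ ℱ.E → ℱ.bundle x' e →
        (bpar ℰ ℱ d₁ d₂).bundle x' e ∧ x' ⊆ ℱ.E :=
      fun x' e _ hb => ⟨Or.inr (Or.inl hb), (hℱ.1 x' e hb).2⟩
    have hbE : ∀ e e', ℰ.conflict e e' → (bpar ℰ ℱ d₁ d₂).conflict e e' :=
      fun e e' hc => Or.inl hc
    have hbF : ∀ e e', ℱ.conflict e e' → (bpar ℰ ℱ d₁ d₂).conflict e e' :=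
      fun e e' hc => Or.inr hc
    have hxE := isConfig_restrict haE hbE hx
    have hxF := isConfig_restrict haF hbF hx
    have hyE := isConfig_restrict haE hbE hy
    have hyF := isConfig_restrict haF hbF hy
    -- finals of both components occurred in x, and d₁ ∈ x
    obtain ⟨α, hα, hsetx⟩ := hx
    have hfα : f ∈ α := by
      rw [← Set.mem_setOf_eq (p := fun e => e ∈ α), hsetx]; exact hfx
    obtain ⟨s, t, hst⟩ := List.append_of_mem hfα
    have ht := hα s f t hst
    obtain ⟨φ, hφs, hφf⟩ :=
      ht.2.1 ℰ.final (Or.inr (Or.inr (Or.inr (Or.inl ⟨rfl, hfd⟩))))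
    obtain ⟨ψ, hψs, hψf⟩ :=
      ht.2.1 ℱ.final (Or.inr (Or.inr (Or.inr (Or.inr ⟨rfl, hfd⟩))))
    have hφx : φ ∈ x := by
      rw [← hsetx]; rw [hst]; exact List.mem_append_left _ hφs
    have hψx : ψ ∈ x := by
      rw [← hsetx]; rw [hst]; exact List.mem_append_left _ hψs
    have hφE : φ ∈ ℰ.E := hℰ.2.1 hφf
    -- d₁ occurred in x
    have hd₁x : d₁ ∈ x := by
      have hφα : φ ∈ α := by
        rw [← Set.mem_setOf_eq (p := fun e => e ∈ α), hsetx]; exact hφx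
      obtain ⟨l₀, e₀, r₀, hdec, he₀, hl₀⟩ :=
        exists_first (p := fun v => v ∈ ℰ.E ∪ ℱ.E) ⟨φ, hφα, Or.inl hφE⟩
      have ht₀ := hα l₀ e₀ r₀ hdec
      have hinit : e₀ ∈ bInit ℰ ∨ e₀ ∈ bInit ℱ := by
        rcases he₀ with h' | h'
        · refine Or.inl ⟨h', fun y hby => ?_⟩
          obtain ⟨v, hv, hvy⟩ := ht₀.2.1 y (Or.inl hby)
          exact hl₀ v hv (Or.inl ((hℰ.1 y e₀ hby).2 hvy))
        · refine Or.inr ⟨h', fun y hby => ?_⟩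
          obtain ⟨v, hv, hvy⟩ := ht₀.2.1 y (Or.inr (Or.inl hby))
          exact hl₀ v hv (Or.inr ((hℱ.1 y e₀ hby).2 hvy))
      obtain ⟨v, hv, hvd⟩ := ht₀.2.1 {d₁} (Or.inr (Or.inr (Or.inl ⟨rfl, hinit⟩)))
      have : v = d₁ := hvd
      subst this
      rw [← hsetx, hdec]
      exact List.mem_append_left _ hv
    have h1 : y ∩ ℰ.E = x ∩ ℰ.E :=
      hℰ.2.2 (x ∩ ℰ.E) (y ∩ ℰ.E) hxE hyE ⟨φ, ⟨hφx, hφE⟩, hφf⟩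
        (Set.inter_subset_inter_left _ hxy)
    have h2 : y ∩ ℱ.E = x ∩ ℱ.E :=
      hℱ.2.2 (x ∩ ℱ.E) (y ∩ ℱ.E) hxF hyF ⟨ψ, ⟨hψx, hℱ.2.1 hψf⟩, hψf⟩
        (Set.inter_subset_inter_left _ hxy)
    have hxset : {e | e ∈ α} = x := hsetx
    apply Set.Subset.antisymm _ hxy
    intro v hv
    have hvE : (v ∈ ℰ.E ∨ v ∈ ℱ.E) ∨ (v = d₁ ∨ v = d₂) := config_subset_E hy hv
    rcases hvE with (h' | h') | (rfl | rfl)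
    · have : v ∈ y ∩ ℰ.E := ⟨hv, h'⟩
      rw [h1] at this; exact this.1
    · have : v ∈ y ∩ ℱ.E := ⟨hv, h'⟩
      rw [h2] at this; exact this.1
    · exact hd₁x
    · exact hfd ▸ hfx

lemma brename_trace {g : Ev → Ev} {ℰ : BES Ev A}
    (hW : ∀ x e, ℰ.bundle x e → e ∈ ℰ.E ∧ x ⊆ ℰ.E) (hg : Set.InjOn g ℰ.E)
    {α : List Ev} (h : IsTrace (brename g ℰ) α) :
    ∃ β, IsTrace ℰ β ∧ α = β.map g := by
  induction α using List.reverseRecOn with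
  | nil => exact ⟨[], isTrace_nil ℰ, rfl⟩
  | append_singleton α e ih =>
    obtain ⟨h1, h2, h3, h4⟩ := isTrace_concat.mp h
    obtain ⟨β, hβ, rfl⟩ := ih h1
    obtain ⟨a, haE, rfl⟩ := h2
    refine ⟨β ++ [a], isTrace_concat.mpr ⟨hβ, haE, ?_, ?_⟩, by simp⟩
    · intro y hy
      obtain ⟨v, hv, hvy⟩ := h3 (g '' y) ⟨y, a, hy, rfl, rfl⟩
      obtain ⟨b, hbβ, rfl⟩ := List.mem_map.mp hv
      obtain ⟨c, hcy, hcb⟩ := hvy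
      have hbE : b ∈ ℰ.E := isTrace_mem hβ hbβ
      have hcE : c ∈ ℰ.E := (hW y a hy).2 hcy
      exact ⟨b, hbβ, hg hcE hbE hcb ▸ hcy⟩
    · intro b hbβ
      have h4' := h4 (g b) (List.mem_map_of_mem hbβ)
      exact ⟨fun hab => h4'.1 (by rw [hab]),
        fun hc => h4'.2 ⟨a, b, hc, rfl, rfl⟩⟩

lemma GoodB_copy {ℰ' ℰ : BES Ev A} (h : GoodB ℰ) (hc : IsCopy ℰ' ℰ) :
    GoodB ℰ' := by
  obtain ⟨g, hg, rfl⟩ := hc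
  refine ⟨?_, ?_, ?_⟩
  · rintro x e ⟨y, a, hy, rfl, rfl⟩
    exact ⟨⟨a, (h.1 y a hy).1, rfl⟩, Set.image_mono (h.1 y a hy).2⟩
  · exact Set.image_mono h.2.1
  · intro x y hx hy hfin hxy
    obtain ⟨α, hα, hsx⟩ := hx
    obtain ⟨β, hβ, hsy⟩ := hy
    obtain ⟨α₀, hα₀, rfl⟩ := brename_trace h.1 hg hα
    obtain ⟨β₀, hβ₀, rfl⟩ := brename_trace h.1 hg hβ
    have hx₀E : {e | e ∈ α₀} ⊆ ℰ.E := fun v hv => isTrace_mem hα₀ hv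
    have hy₀E : {e | e ∈ β₀} ⊆ ℰ.E := fun v hv => isTrace_mem hβ₀ hv
    have himx : x = g '' {e | e ∈ α₀} := by
      rw [← hsx]; ext v; simp [Set.mem_image]
    have himy : y = g '' {e | e ∈ β₀} := by
      rw [← hsy]; ext v; simp [Set.mem_image]
    have hsub : {e | e ∈ α₀} ⊆ {e | e ∈ β₀} := by
      intro a ha
      have hga : g a ∈ y := hxy (by rw [himx]; exact ⟨a, ha, rfl⟩)
      rw [himy] at hga
      obtain ⟨b, hb, hba⟩ := hga
      exact (hg (hy₀E hb) (hx₀E ha) hba) ▸ hb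
    have hfin₀ : ({e | e ∈ α₀} ∩ ℰ.final).Nonempty := by
      obtain ⟨f, hfx, hff⟩ := hfin
      obtain ⟨φ, hφ, rfl⟩ := hff
      rw [himx] at hfx
      obtain ⟨ψ, hψ, hψφ⟩ := hfx
      have hψφ' : ψ = φ := hg (hx₀E hψ) (h.2.1 hφ) hψφ
      exact ⟨ψ, hψ, hψφ' ▸ hφ⟩
    have heq := h.2.2 _ _ ⟨α₀, hα₀, rfl⟩ ⟨β₀, hβ₀, rfl⟩ hfin₀ hsub
    rw [himx, himy, heq]

end FinalMax3
section FinalMax4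

variable {Ev A : Type}

lemma GoodB_star {ℰ ℱ 𝒮 : BES Ev A} (hℰ : GoodB ℰ) (hℱ : GoodB ℱ)
    (hs : IsStarOf ℰ ℱ 𝒮) : GoodB 𝒮 := by
  obtain ⟨c, h0, hstep, hE, hconf, hbun, -, -, hfin⟩ := hs
  have hgood : ∀ i, GoodB (c i) := by
    intro i
    induction i with
    | zero => exact GoodB_copy hℱ h0
    | succ i ih =>
      obtain ⟨ℰ', ℱ', hcE, hcF, hdF, hdE, heq, -⟩ := hstep i
      rw [heq]
      exact GoodB_bchoice (GoodB_copy hℱ hcF)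
        (GoodB_bseq (GoodB_copy hℰ hcE) ih hdE) hdF
  have hsub : ∀ i, SubBES (c i) (c (i + 1)) := by
    intro i
    obtain ⟨_, _, _, _, _, _, _, h⟩ := hstep i
    exact h
  have hmonoE : ∀ i j, i ≤ j → (c i).E ⊆ (c j).E := by
    intro i j hij
    induction j, hij using Nat.le_induction with
    | base => exact subset_rfl
    | succ j hij ih => exact ih.trans (hsub j).1
  have hmonoF : ∀ i j, i ≤ j → (c i).final ⊆ (c j).final := by
    intro i j hij
    induction j, hij using Nat.le_induction with
    | base => exact subset_rfl
    | succ j hij ih =>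
      exact fun f hf => (((hsub j).2.2.2.2.2 f).mp (ih hf)).1
  have hlist : ∀ γ : List Ev, (∀ e ∈ γ, e ∈ 𝒮.E) →
      ∃ i, ∀ e ∈ γ, e ∈ (c i).E := by
    intro γ
    induction γ with
    | nil => exact fun _ => ⟨0, by simp⟩
    | cons a γ ih =>
      intro h
      obtain ⟨i, hi⟩ := ih (fun e he => h e (List.mem_cons_of_mem a he))
      have ha : a ∈ ⋃ j, (c j).E := by
        rw [← hE]; exact h a (List.mem_cons_self)
      obtain ⟨j, hj⟩ := Set.mem_iUnion.mp ha
      refine ⟨max i j, fun e he => ?_⟩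
      rcases List.mem_cons.mp he with rfl | he'
      · exact hmonoE j _ (le_max_right i j) hj
      · exact hmonoE i _ (le_max_left i j) (hi e he')
  refine ⟨?_, ?_, ?_⟩
  · intro x e hb
    obtain ⟨i, hbi⟩ := (hbun x e).mp hb
    have h1 := (hgood i).1 x e hbi
    refine ⟨?_, fun v hv => ?_⟩
    · rw [hE]; exact Set.mem_iUnion.mpr ⟨i, h1.1⟩
    · rw [hE]; exact Set.mem_iUnion.mpr ⟨i, h1.2 hv⟩
  · rw [hfin, hE]
    exact Set.iUnion_mono fun i => (hgood i).2.1
  · intro x y hx hy hfin' hxy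
    obtain ⟨f, hfx, hff⟩ := hfin'
    rw [hfin] at hff
    obtain ⟨k, hk⟩ := Set.mem_iUnion.mp hff
    obtain ⟨α, hα, hsx⟩ := hx
    obtain ⟨β, hβ, hsy⟩ := hy
    obtain ⟨i₁, hi₁⟩ := hlist (α ++ β) (by
      intro e he
      rcases List.mem_append.mp he with h' | h'
      exacts [isTrace_mem hα h', isTrace_mem hβ h'])
    set i := max i₁ k with hidef
    have hxi : x ⊆ (c i).E := by
      intro v hv
      rw [← hsx] at hv
      exact hmonoE i₁ i (le_max_left _ _) (hi₁ v (List.mem_append_left _ hv))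
    have hyi : y ⊆ (c i).E := by
      intro v hv
      rw [← hsy] at hv
      exact hmonoE i₁ i (le_max_left _ _) (hi₁ v (List.mem_append_right _ hv))
    have hki : f ∈ (c i).final := hmonoF k i (le_max_right _ _) hk
    have ha : ∀ x' e, e ∈ (c i).E → (c i).bundle x' e →
        𝒮.bundle x' e ∧ x' ⊆ (c i).E :=
      fun x' e _ hb => ⟨(hbun x' e).mpr ⟨i, hb⟩, ((hgood i).1 x' e hb).2⟩
    have hb' : ∀ e e', (c i).conflict e e' → 𝒮.conflict e e' :=
      fun e e' hc => (hconf e e').mpr ⟨i, hc⟩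
    have hx' : IsConfig (c i) x := by
      have := isConfig_restrict ha hb' ⟨α, hα, hsx⟩
      rwa [Set.inter_eq_left.mpr hxi] at this
    have hy' : IsConfig (c i) y := by
      have := isConfig_restrict ha hb' ⟨β, hβ, hsy⟩
      rwa [Set.inter_eq_left.mpr hyi] at this
    exact (hgood i).2.2 x y hx' hy' ⟨f, hfx, hki⟩ hxy

lemma Regular.goodB {ℰ : BES Ev A} (h : Regular ℰ) : GoodB ℰ := by
  induction h with
  | zero => exact GoodB_zero
  | one e => exact GoodB_one e
  | act e a => exact GoodB_act e a
  | choice h1 h2 hd ih1 ih2 => exact GoodB_bchoice ih1 ih2 hd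
  | seq h1 h2 hd ih1 ih2 => exact GoodB_bseq ih1 ih2 hd
  | par d₁ d₂ h1 h2 hd hdd hd1 hd2 ih1 ih2 =>
    exact GoodB_bpar ih1 ih2 hd hdd hd1 hd2
  | star h1 h2 hs ih1 ih2 => exact GoodB_star ih1 ih2 hs

end FinalMax4

/-- Proposition: in a regular BES, any configuration containing a final event
is maximal among configurations with respect to inclusion. -/
theorem final_config_maximal {Ev A : Type} (ℰ : BES Ev A) (h : Regular ℰ)
    (x : Set Ev) (hx : IsConfig ℰ x) (hfin : (x ∩ ℰ.final).Nonempty) :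
    ∀ y : Set Ev, IsConfig ℰ y → x ⊆ y → y = x := by
  intro y hy hxy
  exact h.goodB.2.2 x y hx hy hfin hxy

end PCKA
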